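/- Let T > 0 and α* ∈ (0,1), and let α : [0,T] → (0, α*] be any function. Then there exists a constant C > 0, depending only on α* and T, such that for every positive integer N (with τ = T/N) and every n with 1 ≤ n ≤ N, Σ_{k=1}^{n} b_k^{(k)} ≤ C, where b_1^{(1)} = 1 + τ a_1^{(1)} and b_k^{(k)} = τ a_k^{(k)} for 2 ≤ k ≤ n, the coefficients at level k being computed with order α̃_k = α(t_{k−1/2}). -/

import Mathlib

/-- The kernel `ω_{1-β}(t) = t^{-β} / Γ(1-β)`. -/
noncomputable def omegaK (β t : ℝ) : ℝ := t ^ (-β) / Real.Gamma (1 - β)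

/-- The L1⁺ coefficient `a_j^{(n)}(α)` on the uniform mesh `t_k = k τ`:
`a_{n-k+1}^{(n)}(α) = (1/τ²) ∫_{t_{n-1}}^{t_n} ∫_{t_{k-1}}^{min(t, t_k)} ω_{1-α}(t-s) ds dt`,
expressed with `j = n - k + 1`, i.e. `k = n - j + 1`. -/
noncomputable def acoef (τ α : ℝ) (n j : ℕ) : ℝ :=
  (1 / τ ^ 2) * ∫ t in (((n : ℝ) - 1) * τ)..((n : ℝ) * τ),
      ∫ s in (((n : ℝ) - (j : ℝ)) * τ)..(min t (((n : ℝ) - (j : ℝ) + 1) * τ)),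
        omegaK α (t - s)

/-- Variable-order coefficients: at time level `n` the order is `α̃_n = α((n - 1/2) τ)`, and
`b_1^{(n)} = 1 + τ a_1^{(n)}`, `b_j^{(n)} = τ a_j^{(n)}` for `j ≥ 2`. -/
noncomputable def bvar (α : ℝ → ℝ) (τ : ℝ) (n j : ℕ) : ℝ :=
  if j = 1 then 1 + τ * acoef τ (α (((n : ℝ) - 1 / 2) * τ)) n 1
  else τ * acoef τ (α (((n : ℝ) - 1 / 2) * τ)) n j

/- ## Auxiliary lemmas -/

private lemma rpow_le_one_add (x p : ℝ) (hx : 0 ≤ x) (hp0 : 0 ≤ p) (hp1 : p ≤ 1) :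
    x ^ p ≤ 1 + x := by
  rcases le_total x 1 with h | h
  · have := Real.rpow_le_one hx h hp0
    linarith
  · calc x ^ p ≤ x ^ (1 : ℝ) := Real.rpow_le_rpow_of_exponent_le h hp1
    _ = x := Real.rpow_one x
    _ ≤ 1 + x := by linarith

private lemma neg_rpow_le (x a b : ℝ) (hx : 0 < x) (h0 : 0 < a) (hab : a ≤ b) :
    x ^ (-a) ≤ 1 + x ^ (-b) := by
  have hb : 0 ≤ x ^ (-b) := Real.rpow_nonneg hx.le _
  rcases le_total 1 x with h | h
  · have h1 : x ^ (-a) ≤ x ^ (0 : ℝ) :=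
      Real.rpow_le_rpow_of_exponent_le h (by linarith)
    rw [Real.rpow_zero] at h1
    linarith
  · have h1 : x ^ (-a) ≤ x ^ (-b) :=
      Real.rpow_le_rpow_of_exponent_ge hx h (by linarith)
    linarith

private lemma continuous_rpow_c (p : ℝ) (hp : 0 ≤ p) : Continuous fun x : ℝ => x ^ p := by
  rw [continuous_iff_continuousAt]
  intro x
  exact Real.continuousAt_rpow_const x p (Or.inr hp)

/-- Closed form of the inner integral. -/
private lemma inner_eq (α t b : ℝ) (hα1 : α < 1) :
    (∫ s in (0:ℝ)..b, omegaK α (t - s))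
      = (t ^ (1 - α) - (t - b) ^ (1 - α)) / ((1 - α) * Real.Gamma (1 - α)) := by
  have h1 : (∫ s in (0:ℝ)..b, omegaK α (t - s))
      = (∫ s in (0:ℝ)..b, (t - s) ^ (-α)) / Real.Gamma (1 - α) := by
    simp only [omegaK]
    exact intervalIntegral.integral_div _ _
  rw [h1, intervalIntegral.integral_comp_sub_left (fun u : ℝ => u ^ (-α)) t,
    integral_rpow (Or.inl (by linarith))]
  rw [sub_zero, show -α + 1 = 1 - α by ring, div_div]

/-- Rewriting the diagonal coefficient using the closed form of the inner integral. -/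
private lemma acoef_eq (τ α : ℝ) (hα1 : α < 1) (k : ℕ) :
    acoef τ α k k = (1 / τ ^ 2) * ∫ t in (((k:ℝ) - 1) * τ)..((k:ℝ) * τ),
      ((t ^ (1 - α) - (t - min t τ) ^ (1 - α)) / ((1 - α) * Real.Gamma (1 - α))) := by
  rw [acoef]
  congr 1
  apply intervalIntegral.integral_congr
  intro t _
  simp only [sub_self, zero_mul, zero_add, one_mul]
  exact inner_eq α t (min t τ) hα1

private lemma G_continuous (τ α : ℝ) (hα1 : α < 1) :
    Continuous fun t : ℝ =>
      (t ^ (1 - α) - (t - min t τ) ^ (1 - α)) / ((1 - α) * Real.Gamma (1 - α)) := by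
  have h1 : Continuous fun t : ℝ => t ^ (1 - α) := continuous_rpow_c _ (by linarith)
  exact (h1.sub (h1.comp (continuous_id.sub (continuous_id.min continuous_const)))).div_const _

/-- Crude bound, valid for every `k ≥ 1`. -/
private lemma acoef_le_crude (τ α : ℝ) (hτ : 0 < τ) (hα0 : 0 < α) (hα1 : α < 1)
    (k : ℕ) (hk : 1 ≤ k) :
    τ * acoef τ α k k ≤ ((k:ℝ) * τ) ^ (1 - α) / ((1 - α) * Real.Gamma (1 - α)) := by
  have hΓ : 0 < Real.Gamma (1 - α) := Real.Gamma_pos_of_pos (by linarith)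
  have hc : 0 < (1 - α) * Real.Gamma (1 - α) := mul_pos (by linarith) hΓ
  have hk1 : (1 : ℝ) ≤ (k : ℝ) := by exact_mod_cast hk
  set M : ℝ := ((k:ℝ) * τ) ^ (1 - α) / ((1 - α) * Real.Gamma (1 - α)) with hM
  have hab : ((k:ℝ) - 1) * τ ≤ (k:ℝ) * τ := by nlinarith
  have hInt : (∫ t in (((k:ℝ) - 1) * τ)..((k:ℝ) * τ),
      ((t ^ (1 - α) - (t - min t τ) ^ (1 - α)) / ((1 - α) * Real.Gamma (1 - α)))) ≤ τ * M := by
    have h1 : (∫ t in (((k:ℝ) - 1) * τ)..((k:ℝ) * τ),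
        ((t ^ (1 - α) - (t - min t τ) ^ (1 - α)) / ((1 - α) * Real.Gamma (1 - α))))
        ≤ ∫ _t in (((k:ℝ) - 1) * τ)..((k:ℝ) * τ), M := by
      apply intervalIntegral.integral_mono_on hab
        ((G_continuous τ α hα1).intervalIntegrable _ _) intervalIntegrable_const
      intro t ht
      have ht0 : 0 ≤ t := le_trans (by nlinarith) ht.1
      have h2 : t ^ (1 - α) ≤ ((k:ℝ) * τ) ^ (1 - α) :=
        Real.rpow_le_rpow ht0 ht.2 (by linarith)
      have h3 : 0 ≤ (t - min t τ) ^ (1 - α) :=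
        Real.rpow_nonneg (by simp [sub_nonneg, min_le_left]) _
      rw [hM]
      apply div_le_div_of_nonneg_right ?_ hc.le
      linarith
    rw [intervalIntegral.integral_const, smul_eq_mul] at h1
    calc (∫ t in (((k:ℝ) - 1) * τ)..((k:ℝ) * τ),
        ((t ^ (1 - α) - (t - min t τ) ^ (1 - α)) / ((1 - α) * Real.Gamma (1 - α))))
        ≤ ((k:ℝ) * τ - ((k:ℝ) - 1) * τ) * M := h1
      _ = τ * M := by ring
  rw [acoef_eq τ α hα1 k]
  calc τ * ((1 / τ ^ 2) * ∫ t in (((k:ℝ) - 1) * τ)..((k:ℝ) * τ),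
      ((t ^ (1 - α) - (t - min t τ) ^ (1 - α)) / ((1 - α) * Real.Gamma (1 - α))))
      ≤ τ * ((1 / τ ^ 2) * (τ * M)) := by
        apply mul_le_mul_of_nonneg_left _ hτ.le
        exact mul_le_mul_of_nonneg_left hInt (by positivity)
    _ = M := by field_simp

/-- Decay bound for `k ≥ 3`. -/
private lemma acoef_le_far (τ α : ℝ) (hτ : 0 < τ) (hα0 : 0 < α) (hα1 : α < 1)
    (k : ℕ) (hk : 3 ≤ k) :
    τ * acoef τ α k k ≤ τ * ((((k:ℝ) - 2) * τ) ^ (-α) / Real.Gamma (1 - α)) := by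
  have hΓ : 0 < Real.Gamma (1 - α) := Real.Gamma_pos_of_pos (by linarith)
  have hk3 : (3 : ℝ) ≤ (k : ℝ) := by exact_mod_cast hk
  have hx0 : 0 < ((k:ℝ) - 2) * τ := by nlinarith
  set B : ℝ := (((k:ℝ) - 2) * τ) ^ (-α) / Real.Gamma (1 - α) with hB
  have hB0 : 0 ≤ B := div_nonneg (Real.rpow_nonneg hx0.le _) hΓ.le
  have hab : ((k:ℝ) - 1) * τ ≤ (k:ℝ) * τ := by nlinarith
  have hInt : (∫ t in (((k:ℝ) - 1) * τ)..((k:ℝ) * τ),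
      ((t ^ (1 - α) - (t - min t τ) ^ (1 - α)) / ((1 - α) * Real.Gamma (1 - α)))) ≤ τ * (τ * B) := by
    have h1 : (∫ t in (((k:ℝ) - 1) * τ)..((k:ℝ) * τ),
        ((t ^ (1 - α) - (t - min t τ) ^ (1 - α)) / ((1 - α) * Real.Gamma (1 - α))))
        ≤ ∫ _t in (((k:ℝ) - 1) * τ)..((k:ℝ) * τ), τ * B := by
      apply intervalIntegral.integral_mono_on hab
        ((G_continuous τ α hα1).intervalIntegrable _ _) intervalIntegrable_const
      intro t ht
      have htτ : τ ≤ t := le_trans (by nlinarith) ht.1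
      have hmin : min t τ = τ := min_eq_right htτ
      rw [hmin, ← inner_eq α t τ hα1]
      have hfi : IntervalIntegrable (fun s => omegaK α (t - s)) MeasureTheory.volume 0 τ := by
        apply ContinuousOn.intervalIntegrable
        rw [Set.uIcc_of_le hτ.le]
        apply ContinuousOn.div_const
        apply ContinuousOn.rpow_const (continuousOn_const.sub continuousOn_id)
        intro s hs
        left
        have hts : ((k:ℝ) - 2) * τ ≤ t - s := by
          have h1 : ((k:ℝ) - 1) * τ ≤ t := ht.1
          have h2 : s ≤ τ := hs.2
          nlinarith
        have : 0 < t - s := lt_of_lt_of_le hx0 hts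
        exact ne_of_gt this
      have h2 : (∫ s in (0:ℝ)..τ, omegaK α (t - s)) ≤ ∫ _s in (0:ℝ)..τ, B := by
        apply intervalIntegral.integral_mono_on hτ.le hfi intervalIntegrable_const
        intro s hs
        have hle : ((k:ℝ) - 2) * τ ≤ t - s := by
          have h1 : ((k:ℝ) - 1) * τ ≤ t := ht.1
          have h2 : s ≤ τ := hs.2
          nlinarith
        have hrp : (t - s) ^ (-α) ≤ (((k:ℝ) - 2) * τ) ^ (-α) :=
          Real.rpow_le_rpow_of_nonpos hx0 hle (by linarith)
        rw [omegaK, hB]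
        exact div_le_div_of_nonneg_right hrp hΓ.le
      rw [intervalIntegral.integral_const, smul_eq_mul, sub_zero] at h2
      exact h2
    rw [intervalIntegral.integral_const, smul_eq_mul] at h1
    calc (∫ t in (((k:ℝ) - 1) * τ)..((k:ℝ) * τ),
        ((t ^ (1 - α) - (t - min t τ) ^ (1 - α)) / ((1 - α) * Real.Gamma (1 - α))))
        ≤ ((k:ℝ) * τ - ((k:ℝ) - 1) * τ) * (τ * B) := h1
      _ = τ * (τ * B) := by ring
  rw [acoef_eq τ α hα1 k]
  calc τ * ((1 / τ ^ 2) * ∫ t in (((k:ℝ) - 1) * τ)..((k:ℝ) * τ),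
      ((t ^ (1 - α) - (t - min t τ) ^ (1 - α)) / ((1 - α) * Real.Gamma (1 - α))))
      ≤ τ * ((1 / τ ^ 2) * (τ * (τ * B))) := by
        apply mul_le_mul_of_nonneg_left _ hτ.le
        exact mul_le_mul_of_nonneg_left hInt (by positivity)
    _ = τ * B := by field_simp

/-- Uniform positive lower bound for `Γ` on `[1-αb, 1]`. -/
private lemma gamma_min (αb : ℝ) (h0 : 0 < αb) (h1 : αb < 1) :
    ∃ g > 0, ∀ x ∈ Set.Icc (1 - αb) 1, g ≤ Real.Gamma x := by
  have hc : ContinuousOn Real.Gamma (Set.Icc (1 - αb) 1) := by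
    intro x hx
    have hx0 : 0 < x := by have := hx.1; linarith
    have hne : ∀ m : ℕ, x ≠ -(m : ℝ) := fun m =>
      ((lt_of_le_of_lt (neg_nonpos.2 (Nat.cast_nonneg m)) hx0)).ne'
    exact (Real.differentiableAt_Gamma hne).continuousAt.continuousWithinAt
  obtain ⟨x₀, hx₀, hmin⟩ := isCompact_Icc.exists_isMinOn
    ⟨1, by constructor <;> linarith⟩ hc
  exact ⟨Real.Gamma x₀, Real.Gamma_pos_of_pos (by have := hx₀.1; linarith),
    fun x hx => hmin hx⟩

/-- Step comparison: `τ (mτ)^{-αb} ≤ ((mτ)^{1-αb} - ((m-1)τ)^{1-αb})/(1-αb)`. -/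
private lemma step_bound (τ αb : ℝ) (hτ : 0 < τ) (h0 : 0 < αb) (h1 : αb < 1)
    (m : ℕ) (hm : 1 ≤ m) :
    τ * ((m:ℝ) * τ) ^ (-αb)
      ≤ (((m:ℝ) * τ) ^ (1 - αb) - (((m:ℝ) - 1) * τ) ^ (1 - αb)) / (1 - αb) := by
  have hq0 : 0 < 1 - αb := by linarith
  rcases eq_or_lt_of_le hm with h | h
  · -- m = 1
    have hm1 : (m : ℝ) = 1 := by exact_mod_cast h.symm
    rw [hm1]
    simp only [one_mul, sub_self, zero_mul]
    rw [Real.zero_rpow hq0.ne', sub_zero]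
    have hτq : τ * τ ^ (-αb) = τ ^ (1 - αb) := by
      rw [show (1 : ℝ) - αb = 1 + -αb by ring, Real.rpow_add hτ, Real.rpow_one]
    rw [hτq, le_div_iff₀ hq0]
    have hp : 0 ≤ τ ^ (1 - αb) := Real.rpow_nonneg hτ.le _
    nlinarith
  · -- m ≥ 2
    have hm2 : (2 : ℝ) ≤ (m : ℝ) := by exact_mod_cast h
    have ha0 : 0 < ((m:ℝ) - 1) * τ := by nlinarith
    have hb0 : 0 < (m:ℝ) * τ := by nlinarith
    have hab : ((m:ℝ) - 1) * τ ≤ (m:ℝ) * τ := by nlinarith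
    have hfi : IntervalIntegrable (fun x : ℝ => x ^ (-αb)) MeasureTheory.volume
        (((m:ℝ) - 1) * τ) ((m:ℝ) * τ) := by
      apply ContinuousOn.intervalIntegrable
      rw [Set.uIcc_of_le hab]
      apply ContinuousOn.rpow_const continuousOn_id
      intro x hx
      left
      have := hx.1
      exact ne_of_gt (lt_of_lt_of_le ha0 this)
    have key : τ * ((m:ℝ) * τ) ^ (-αb)
        ≤ ∫ x in (((m:ℝ) - 1) * τ)..((m:ℝ) * τ), x ^ (-αb) := by
      have h1 : (∫ _x in (((m:ℝ) - 1) * τ)..((m:ℝ) * τ), ((m:ℝ) * τ) ^ (-αb))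
          ≤ ∫ x in (((m:ℝ) - 1) * τ)..((m:ℝ) * τ), x ^ (-αb) := by
        apply intervalIntegral.integral_mono_on hab intervalIntegrable_const hfi
        intro x hx
        exact Real.rpow_le_rpow_of_nonpos (lt_of_lt_of_le ha0 hx.1) hx.2 (by linarith)
      rw [intervalIntegral.integral_const, smul_eq_mul] at h1
      calc τ * ((m:ℝ) * τ) ^ (-αb)
          = ((m:ℝ) * τ - ((m:ℝ) - 1) * τ) * ((m:ℝ) * τ) ^ (-αb) := by ring
        _ ≤ _ := h1
    calc τ * ((m:ℝ) * τ) ^ (-αb)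
        ≤ ∫ x in (((m:ℝ) - 1) * τ)..((m:ℝ) * τ), x ^ (-αb) := key
      _ = (((m:ℝ) * τ) ^ (1 - αb) - (((m:ℝ) - 1) * τ) ^ (1 - αb)) / (1 - αb) := by
          rw [integral_rpow (Or.inl (by linarith))]
          rw [show -αb + 1 = 1 - αb by ring]

private lemma telescope (F : ℕ → ℝ) : ∀ n, 2 ≤ n →
    ∑ k ∈ Finset.Icc 3 n, (F (k - 2) - F (k - 3)) = F (n - 2) - F 0 := by
  intro n hn
  induction n with
  | zero => omega
  | succ n ih =>
    rcases Nat.lt_or_ge n 2 with h | h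
    · have : n = 1 := by omega
      subst this
      simp
    · rw [Finset.sum_Icc_succ_top (by omega : 3 ≤ n + 1), ih h]
      have e2 : n + 1 - 3 = n - 2 := by omega
      rw [e2]
      ring

set_option maxHeartbeats 1000000 in
theorem stmt5 (T αb : ℝ) (hT : 0 < T) (hαb : αb ∈ Set.Ioo (0 : ℝ) 1)
    (α : ℝ → ℝ) (hα : ∀ t ∈ Set.Icc (0 : ℝ) T, 0 < α t ∧ α t ≤ αb) :
    ∃ C > 0, ∀ N : ℕ, 0 < N → ∀ n : ℕ, 1 ≤ n → n ≤ N →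
      ∑ k ∈ Finset.Icc 1 n, bvar α (T / N) k k ≤ C := by
  obtain ⟨hαb0, hαb1⟩ := hαb
  obtain ⟨g, hg0, hgle⟩ := gamma_min αb hαb0 hαb1
  have hq0 : 0 < 1 - αb := by linarith
  set C0 : ℝ := 1 / ((1 - αb) * g) with hC0
  have hC00 : 0 < C0 := by rw [hC0]; exact one_div_pos.mpr (mul_pos hq0 hg0)
  set A : ℝ := 1 + (1 + T) * C0 with hA
  have hA0 : 0 < A := by rw [hA]; nlinarith [mul_pos (show (0:ℝ) < 1 + T by linarith) hC00]
  refine ⟨2 * A + C0 * (T + (1 + T) / (1 - αb)),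
    by nlinarith [hA0, mul_pos hC00 (add_pos hT (div_pos (show (0:ℝ) < 1 + T by linarith) hq0))], ?_⟩
  intro N hN n hn1 hnN
  set τ : ℝ := T / N with hτdef
  have hN0 : (0 : ℝ) < N := by exact_mod_cast hN
  have hτ : 0 < τ := div_pos hT hN0
  have hNτ : (N : ℝ) * τ = T := by rw [hτdef]; field_simp
  have hord : ∀ k : ℕ, 1 ≤ k → k ≤ n →
      0 < α (((k:ℝ) - 1/2) * τ) ∧ α (((k:ℝ) - 1/2) * τ) ≤ αb := by
    intro k hk1 hkn
    apply hα
    have hk1' : (1 : ℝ) ≤ (k : ℝ) := by exact_mod_cast hk1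
    have hkN : (k : ℝ) ≤ (N : ℝ) := by exact_mod_cast le_trans hkn hnN
    constructor
    · nlinarith
    · nlinarith
  set F : ℕ → ℝ := fun m => ((m:ℝ) * τ) ^ (1 - αb) / (1 - αb) with hF
  set v : ℕ → ℝ := fun k => if k ≤ 2 then A else C0 * (τ + (F (k - 2) - F (k - 3))) with hv
  have hFmono : ∀ i j : ℕ, i ≤ j → F i ≤ F j := by
    intro i j hij
    simp only [hF]
    apply div_le_div_of_nonneg_right ?_ hq0.le
    apply Real.rpow_le_rpow (mul_nonneg (Nat.cast_nonneg i) hτ.le) _ hq0.le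
    have : (i : ℝ) ≤ (j : ℝ) := by exact_mod_cast hij
    nlinarith
  -- per-term bound
  have hterm : ∀ k ∈ Finset.Icc 1 n, bvar α τ k k ≤ v k := by
    intro k hk
    rw [Finset.mem_Icc] at hk
    obtain ⟨hk1, hkn⟩ := hk
    obtain ⟨hαk0, hαkb⟩ := hord k hk1 hkn
    set αk : ℝ := α (((k:ℝ) - 1/2) * τ) with hαk
    have hαk1 : αk < 1 := lt_of_le_of_lt hαkb hαb1
    have hΓk : g ≤ Real.Gamma (1 - αk) := by
      apply hgle
      constructor
      · linarith
      · linarith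
    have hΓk0 : 0 < Real.Gamma (1 - αk) := Real.Gamma_pos_of_pos (by linarith)
    have hqαk : 1 - αb ≤ 1 - αk := by linarith
    have hcC0 : 1 / ((1 - αk) * Real.Gamma (1 - αk)) ≤ C0 := by
      rw [hC0]
      apply one_div_le_one_div_of_le (mul_pos hq0 hg0)
      apply mul_le_mul hqαk hΓk hg0.le (by linarith)
    have hΓC0 : 1 / Real.Gamma (1 - αk) ≤ C0 := by
      rw [hC0]
      apply one_div_le_one_div_of_le (mul_pos hq0 hg0)
      nlinarith [hg0, hΓk, hαb0, hαb1]
    have hkτT : (k : ℝ) * τ ≤ T := by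
      have hkN : (k : ℝ) ≤ (N : ℝ) := by exact_mod_cast le_trans hkn hnN
      nlinarith
    have hcrude : τ * acoef τ αk k k ≤ (1 + T) * C0 := by
      calc τ * acoef τ αk k k
          ≤ ((k:ℝ) * τ) ^ (1 - αk) / ((1 - αk) * Real.Gamma (1 - αk)) :=
            acoef_le_crude τ αk hτ hαk0 hαk1 k hk1
        _ = ((k:ℝ) * τ) ^ (1 - αk) * (1 / ((1 - αk) * Real.Gamma (1 - αk))) := by ring
        _ ≤ (1 + T) * C0 := by
            apply mul_le_mul _ hcC0
              (one_div_nonneg.mpr (mul_nonneg (by linarith) hΓk0.le)) (by linarith)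
            calc ((k:ℝ) * τ) ^ (1 - αk) ≤ 1 + (k:ℝ) * τ :=
                rpow_le_one_add _ _ (mul_nonneg (Nat.cast_nonneg k) hτ.le)
                  (by linarith) (by linarith)
              _ ≤ 1 + T := by linarith
    rcases Nat.lt_or_ge k 3 with hk3 | hk3
    · -- k = 1 or 2
      have hvk : v k = A := by
        simp only [hv]
        rw [if_pos (by omega)]
      rw [hvk, hA]
      rcases Nat.eq_or_lt_of_le hk1 with h1 | h1
      · -- k = 1
        rw [bvar, if_pos h1.symm]
        have he : acoef τ (α (((k:ℝ) - 1/2) * τ)) k 1 = acoef τ αk k k := by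
          rw [← hαk, ← h1]
        rw [he]
        linarith
      · -- k = 2
        rw [bvar, if_neg (by omega), ← hαk]
        linarith
    · -- k ≥ 3
      have hvk : v k = C0 * (τ + (F (k - 2) - F (k - 3))) := by
        simp only [hv]
        rw [if_neg (by omega)]
      rw [hvk, bvar, if_neg (by omega), ← hαk]
      have hk3' : (3 : ℝ) ≤ (k : ℝ) := by exact_mod_cast hk3
      have hx0 : 0 < ((k:ℝ) - 2) * τ := by nlinarith
      have hcast2 : ((k - 2 : ℕ) : ℝ) = (k : ℝ) - 2 := by
        have : (2 : ℕ) ≤ k := by omega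
        push_cast [Nat.cast_sub this]
        ring
      have hcast3 : ((k - 3 : ℕ) : ℝ) = (k : ℝ) - 3 := by
        push_cast [Nat.cast_sub hk3]
        ring
      have hstep2 : τ * (((k:ℝ) - 2) * τ) ^ (-αb) ≤ F (k - 2) - F (k - 3) := by
        have hsb := step_bound τ αb hτ hαb0 hαb1 (k - 2) (by omega)
        rw [hcast2] at hsb
        rw [show (k:ℝ) - 2 - 1 = (k:ℝ) - 3 by ring] at hsb
        have hFd : F (k - 2) - F (k - 3)
            = ((((k:ℝ) - 2) * τ) ^ (1 - αb) - (((k:ℝ) - 3) * τ) ^ (1 - αb)) / (1 - αb) := by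
          simp only [hF]
          rw [hcast2, hcast3, div_sub_div_same]
        rw [hFd]
        exact hsb
      have hdF0 : 0 ≤ F (k - 2) - F (k - 3) := by
        have := hFmono (k - 3) (k - 2) (by omega)
        linarith
      calc τ * acoef τ αk k k
          ≤ τ * ((((k:ℝ) - 2) * τ) ^ (-αk) / Real.Gamma (1 - αk)) :=
            acoef_le_far τ αk hτ hαk0 hαk1 k hk3
        _ = (τ * (((k:ℝ) - 2) * τ) ^ (-αk)) * (1 / Real.Gamma (1 - αk)) := by ring
        _ ≤ (τ + (F (k - 2) - F (k - 3))) * C0 := by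
            refine mul_le_mul ?_ hΓC0 (one_div_nonneg.mpr hΓk0.le)
              (by linarith [hdF0, hτ.le])
            have hstep1 : (((k:ℝ) - 2) * τ) ^ (-αk)
                ≤ 1 + (((k:ℝ) - 2) * τ) ^ (-αb) :=
              neg_rpow_le _ _ _ hx0 hαk0 hαkb
            calc τ * (((k:ℝ) - 2) * τ) ^ (-αk)
                ≤ τ * (1 + (((k:ℝ) - 2) * τ) ^ (-αb)) :=
                  mul_le_mul_of_nonneg_left hstep1 hτ.le
              _ = τ + τ * (((k:ℝ) - 2) * τ) ^ (-αb) := by ring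
              _ ≤ τ + (F (k - 2) - F (k - 3)) := by linarith [hstep2]
        _ = C0 * (τ + (F (k - 2) - F (k - 3))) := by ring
  have hsum1 : ∑ k ∈ Finset.Icc 1 n, bvar α τ k k ≤ ∑ k ∈ Finset.Icc 1 n, v k :=
    Finset.sum_le_sum hterm
  -- bound the sum of v
  have hvA : v 1 = A := by simp only [hv]; norm_num
  have hv2 : v 2 = A := by simp only [hv]; norm_num
  have hFn : F (n - 2) ≤ (1 + T) / (1 - αb) := by
    simp only [hF]
    apply div_le_div_of_nonneg_right ?_ hq0.le
    have hn2 : ((n - 2 : ℕ) : ℝ) ≤ (N : ℝ) := by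
      have : (n - 2 : ℕ) ≤ N := by omega
      exact_mod_cast this
    have hle : ((n - 2 : ℕ) : ℝ) * τ ≤ T := by
      nlinarith [show (0:ℝ) ≤ ((n - 2 : ℕ) : ℝ) from Nat.cast_nonneg _]
    calc (((n - 2 : ℕ) : ℝ) * τ) ^ (1 - αb) ≤ 1 + ((n - 2 : ℕ) : ℝ) * τ :=
        rpow_le_one_add _ _ (mul_nonneg (Nat.cast_nonneg _) hτ.le) hq0.le (by linarith)
      _ ≤ 1 + T := by linarith
  rcases Nat.lt_or_ge n 3 with hn3 | hn3
  · -- n = 1 or 2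
    have hsum2 : ∑ k ∈ Finset.Icc 1 n, v k ≤ 2 * A := by
      interval_cases n
      · simp [hvA]; linarith
      · rw [show Finset.Icc 1 2 = {1, 2} by decide, Finset.sum_insert (by decide),
          Finset.sum_singleton, hvA, hv2]
        linarith
    have hrest : 0 ≤ C0 * (T + (1 + T) / (1 - αb)) :=
      mul_nonneg hC00.le (le_of_lt (add_pos hT (div_pos (by linarith) hq0)))
    linarith
  · -- n ≥ 3
    have hsplit : ∑ k ∈ Finset.Icc 1 n, v k
        = (v 1 + v 2) + ∑ k ∈ Finset.Icc 3 n, v k := by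
      rw [← Finset.Ico_add_one_right_eq_Icc 1 n,
        ← Finset.sum_Ico_consecutive v (by omega : 1 ≤ 3) (by omega : 3 ≤ n + 1),
        Finset.Ico_add_one_right_eq_Icc 3 n]
      congr 1
      rw [show Finset.Ico 1 3 = {1, 2} by decide, Finset.sum_insert (by decide),
        Finset.sum_singleton]
    have htail : ∑ k ∈ Finset.Icc 3 n, v k
        = C0 * ((((n : ℝ) - 2)) * τ + (F (n - 2) - F 0)) := by
      have h1 : ∑ k ∈ Finset.Icc 3 n, v k
          = ∑ k ∈ Finset.Icc 3 n, (C0 * τ + C0 * (F (k - 2) - F (k - 3))) := by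
        apply Finset.sum_congr rfl
        intro k hk
        rw [Finset.mem_Icc] at hk
        simp only [hv]
        rw [if_neg (by omega)]
        ring
      rw [h1, Finset.sum_add_distrib, Finset.sum_const, ← Finset.mul_sum,
        telescope F n (by omega), Nat.card_Icc]
      have hcard : ((n + 1 - 3 : ℕ) : ℝ) = (n : ℝ) - 2 := by
        have h2n : 2 ≤ n := by omega
        have hred : n + 1 - 3 = n - 2 := by omega
        rw [hred, Nat.cast_sub h2n]
        push_cast
        ring
      rw [nsmul_eq_mul, hcard]
      ring
    have hF0 : F 0 = 0 := by
      simp only [hF, Nat.cast_zero, zero_mul]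
      rw [Real.zero_rpow hq0.ne', zero_div]
    have hn2τ : ((n : ℝ) - 2) * τ ≤ T := by
      have hnN' : (n : ℝ) ≤ (N : ℝ) := by exact_mod_cast hnN
      nlinarith
    have hn2τ0 : 0 ≤ ((n : ℝ) - 2) * τ := by
      have : (3 : ℝ) ≤ (n : ℝ) := by exact_mod_cast hn3
      nlinarith
    have htail2 : ∑ k ∈ Finset.Icc 3 n, v k ≤ C0 * (T + (1 + T) / (1 - αb)) := by
      rw [htail, hF0, sub_zero]
      apply mul_le_mul_of_nonneg_left _ hC00.le
      linarith
    calc ∑ k ∈ Finset.Icc 1 n, bvar α τ k k ≤ ∑ k ∈ Finset.Icc 1 n, v k := hsum1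
      _ = (v 1 + v 2) + ∑ k ∈ Finset.Icc 3 n, v k := hsplit
      _ ≤ 2 * A + C0 * (T + (1 + T) / (1 - αb)) := by
          rw [hvA, hv2]; linarith [htail2]
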